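/- Let f ∈ ℂ[x,y] be a homogeneous polynomial of degree d > 1 having an isolated singularity at the origin, i.e. the only common zero of f_x and f_y in ℂ² is (0,0). Then the Brieskorn module B(f) = ℂ[x,y]/D_f, regarded as a module over ℂ[t] with t acting by multiplication by f, is a free ℂ[t]-module of rank μ(f) = dim_ℂ(ℂ[x,y]/J_f) (the Milnor number of f at the origin). -/

import Mathlib

open MvPolynomial

/-- The linear map `g ↦ f_x·∂g/∂y − f_y·∂g/∂x` whose range is `D_f`. -/
noncomputable def Dmap (f : MvPolynomial (Fin 2) ℂ) :
    MvPolynomial (Fin 2) ℂ →ₗ[ℂ] MvPolynomial (Fin 2) ℂ where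
  toFun g := pderiv 0 f * pderiv 1 g - pderiv 1 f * pderiv 0 g
  map_add' g h := by simp only [map_add]; ring
  map_smul' c g := by
    simp only [Derivation.map_smul, RingHom.id_apply, smul_sub, mul_smul_comm]

/-- `D_f = {f_x·∂g/∂y − f_y·∂g/∂x : g ∈ ℂ[x,y]}` as a `ℂ`-subspace of `ℂ[x,y]`. -/
noncomputable def Dsub (f : MvPolynomial (Fin 2) ℂ) :
    Submodule ℂ (MvPolynomial (Fin 2) ℂ) :=
  LinearMap.range (Dmap f)

lemma mulLeft_le_comap_Dsub (f : MvPolynomial (Fin 2) ℂ) :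
    Dsub f ≤ (Dsub f).comap (LinearMap.mulLeft ℂ f) := by
  rintro w ⟨g, rfl⟩
  refine ⟨f * g, ?_⟩
  simp only [Dmap, LinearMap.coe_mk, AddHom.coe_mk, Submodule.mem_comap,
    LinearMap.mulLeft_apply, pderiv_mul]
  ring

/-- Multiplication by `f` on the Brieskorn module `B(f) = ℂ[x,y]/D_f`
(the action of `t`). -/
noncomputable def Bmul (f : MvPolynomial (Fin 2) ℂ) :
    (MvPolynomial (Fin 2) ℂ ⧸ Dsub f) →ₗ[ℂ] (MvPolynomial (Fin 2) ℂ ⧸ Dsub f) :=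
  Submodule.mapQ (Dsub f) (Dsub f) (LinearMap.mulLeft ℂ f) (mulLeft_le_comap_Dsub f)

namespace Brieskorn

local notation "R2" => MvPolynomial (Fin 2) ℂ

lemma Dmap_apply (f g : R2) :
    Dmap f g = pderiv 0 f * pderiv 1 g - pderiv 1 f * pderiv 0 g := rfl

/-! ### Basic graded lemmas -/

lemma degree_fin2 (u : Fin 2 →₀ ℕ) : u.degree = u 0 + u 1 := by
  classical
  rw [Finsupp.degree_apply]
  rw [Finset.sum_subset (Finset.subset_univ u.support)]
  · exact Fin.sum_univ_two u
  · intro x _ hx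
    simpa using hx

lemma isHomogeneous_degree_eq {p : R2} {n : ℕ} (hp : p.IsHomogeneous n) {u : Fin 2 →₀ ℕ}
    (hu : u ∈ p.support) : u 0 + u 1 = n := by
  rw [← degree_fin2]
  by_contra hne
  exact mem_support_iff.1 hu (hp.coeff_eq_zero hne)

lemma pderiv_isHomogeneous {p : R2} {n : ℕ} (hp : p.IsHomogeneous n) (i : Fin 2) :
    (pderiv i p).IsHomogeneous (n - 1) := by
  conv_lhs => rw [p.as_sum]
  rw [map_sum]
  apply MvPolynomial.IsHomogeneous.sum
  intro u hu
  rw [pderiv_monomial]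
  rcases Nat.eq_zero_or_pos (u i) with h0 | hpos
  · rw [h0]; simp only [Nat.cast_zero, mul_zero, map_zero]
    exact isHomogeneous_zero _ _ _
  · apply isHomogeneous_monomial
    have hdeg : u 0 + u 1 = n := isHomogeneous_degree_eq hp hu
    rw [degree_fin2]
    rw [Finsupp.tsub_apply, Finsupp.tsub_apply]
    fin_cases i <;>
      simp only [Finsupp.single_apply] <;> simp_all <;> omega

lemma X_mul_pderiv_monomial (u : Fin 2 →₀ ℕ) (c : ℂ) (i : Fin 2) :
    X i * pderiv i (monomial u c) = monomial u (c * (u i : ℂ)) := by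
  rw [pderiv_monomial]
  rcases Nat.eq_zero_or_pos (u i) with h0 | hpos
  · rw [h0]; simp
  · have huu : (Finsupp.single i 1) + (u - Finsupp.single i 1) = u := by
      ext a
      rw [Finsupp.add_apply, Finsupp.tsub_apply, Finsupp.single_apply]
      rcases eq_or_ne i a with rfl | hne
      · simp; omega
      · simp [hne]
    rw [X, monomial_mul, huu, one_mul]

/-- Euler's identity for homogeneous polynomials in two variables. -/
lemma euler {p : R2} {n : ℕ} (hp : p.IsHomogeneous n) :
    (n : ℂ) • p = X 0 * pderiv 0 p + X 1 * pderiv 1 p := by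
  conv_lhs => rw [p.as_sum]
  conv_rhs => rw [p.as_sum]
  rw [map_sum, map_sum, Finset.mul_sum, Finset.mul_sum, ← Finset.sum_add_distrib,
    Finset.smul_sum]
  apply Finset.sum_congr rfl
  intro u hu
  rw [X_mul_pderiv_monomial, X_mul_pderiv_monomial, smul_eq_C_mul, C_mul_monomial,
    ← map_add]
  congr 1
  rw [← isHomogeneous_degree_eq hp hu]
  push_cast
  ring

lemma pderiv_comm (i j : Fin 2) (p : R2) :
    pderiv i (pderiv j p) = pderiv j (pderiv i p) := by
  rcases eq_or_ne i j with rfl | hne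
  · rfl
  · induction p using MvPolynomial.induction_on' with
    | monomial u a =>
      rw [pderiv_monomial, pderiv_monomial, pderiv_monomial, pderiv_monomial]
      rw [Finsupp.tsub_apply, Finsupp.tsub_apply, Finsupp.single_apply, Finsupp.single_apply,
        if_neg hne, if_neg (Ne.symm hne)]
      simp only [Nat.sub_zero]
      have huu : u - Finsupp.single j 1 - Finsupp.single i 1
          = u - Finsupp.single i 1 - Finsupp.single j 1 := by
        ext a'
        simp only [Finsupp.tsub_apply]
        omega
      rw [huu]
      ring_nf
    | add p q hp hq => simp only [map_add, hp, hq]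

lemma csmul_isHomogeneous {p : R2} {n : ℕ} (c : ℂ) (hp : p.IsHomogeneous n) :
    (c • p).IsHomogeneous n :=
  (mem_homogeneousSubmodule _ _).1
    ((homogeneousSubmodule (Fin 2) ℂ n).smul_mem c ((mem_homogeneousSubmodule _ _).2 hp))

lemma pderiv_eq_zero_of_isHomogeneous_zero {p : R2} (hp : p.IsHomogeneous 0) (i : Fin 2) :
    pderiv i p = 0 := by
  conv_lhs => rw [p.as_sum, map_sum]
  apply Finset.sum_eq_zero
  intro u hu
  have h0 : u 0 + u 1 = 0 := isHomogeneous_degree_eq hp hu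
  rw [pderiv_monomial]
  have h00 : u 0 = 0 := by omega
  have h11 : u 1 = 0 := by omega
  have : u i = 0 := by fin_cases i
                       · exact h00
                       · exact h11
  rw [this]
  simp

lemma Dmap_isHomogeneous {f : R2} {d : ℕ} (hf : f.IsHomogeneous d) {g : R2} {n : ℕ}
    (hg : g.IsHomogeneous n) : (Dmap f g).IsHomogeneous (d - 1 + (n - 1)) :=
  ((pderiv_isHomogeneous hf 0).mul (pderiv_isHomogeneous hg 1)).sub
    ((pderiv_isHomogeneous hf 1).mul (pderiv_isHomogeneous hg 0))

/-! ### Homogeneous components of products and of `Dmap` -/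

lemma homogeneousComponent_mul_right {q : R2} {e : ℕ} (hq : q.IsHomogeneous e) (p : R2)
    {k : ℕ} (hek : e ≤ k) :
    homogeneousComponent k (p * q) = homogeneousComponent (k - e) p * q := by
  conv_lhs => rw [← sum_homogeneousComponent p, Finset.sum_mul, map_sum]
  have h1 : ∀ n ∈ Finset.range (p.totalDegree + 1),
      homogeneousComponent k (homogeneousComponent n p * q)
        = if n = k - e then homogeneousComponent n p * q else 0 := by
    intro n _
    rw [homogeneousComponent_of_mem ((mem_homogeneousSubmodule _ _).2
      ((homogeneousComponent_isHomogeneous n p).mul hq))]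
    congr 1
    simp only [eq_iff_iff]
    omega
  rw [Finset.sum_congr rfl h1, Finset.sum_ite_eq' (Finset.range (p.totalDegree + 1))]
  split_ifs with hmem
  · rfl
  · rw [homogeneousComponent_eq_zero, zero_mul]
    simp only [Finset.mem_range] at hmem
    omega

lemma homogeneousComponent_mul_right_of_lt {q : R2} {e : ℕ} (hq : q.IsHomogeneous e) (p : R2)
    {k : ℕ} (hke : k < e) : homogeneousComponent k (p * q) = 0 := by
  conv_lhs => rw [← sum_homogeneousComponent p, Finset.sum_mul, map_sum]
  apply Finset.sum_eq_zero
  intro n _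
  rw [homogeneousComponent_of_mem ((mem_homogeneousSubmodule _ _).2
    ((homogeneousComponent_isHomogeneous n p).mul hq)), if_neg (by omega)]

lemma homogeneousComponent_Dmap {f : R2} {d : ℕ} (hf : f.IsHomogeneous d) (hd : 2 ≤ d)
    (g : R2) (m : ℕ) :
    homogeneousComponent (m + d) (Dmap f g) = Dmap f (homogeneousComponent (m + 2) g) := by
  conv_lhs => rw [← sum_homogeneousComponent g, map_sum, map_sum]
  have h1 : ∀ n ∈ Finset.range (g.totalDegree + 1),
      homogeneousComponent (m + d) (Dmap f (homogeneousComponent n g))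
        = if n = m + 2 then Dmap f (homogeneousComponent n g) else 0 := by
    intro n _
    rw [homogeneousComponent_of_mem ((mem_homogeneousSubmodule _ _).2
      (Dmap_isHomogeneous hf (homogeneousComponent_isHomogeneous n g)))]
    congr 1
    simp only [eq_iff_iff]
    omega
  rw [Finset.sum_congr rfl h1, Finset.sum_ite_eq' (Finset.range (g.totalDegree + 1))]
  split_ifs with hmem
  · rfl
  · rw [homogeneousComponent_eq_zero, map_zero]
    simp only [Finset.mem_range] at hmem
    omega

/-! ### The key identities -/

lemma keyA {f : R2} {d : ℕ} (hf : f.IsHomogeneous d) {a : R2} {m : ℕ}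
    (ha : a.IsHomogeneous m) :
    ((m : ℂ) + 1) • (a * pderiv 0 f)
      = Dmap f (a * X 1) + (d : ℂ) • (f * pderiv 0 a) := by
  have Ef := euler hf; rw [smul_eq_C_mul] at Ef
  have Ea := euler ha; rw [smul_eq_C_mul] at Ea
  rw [Dmap_apply, smul_eq_C_mul, smul_eq_C_mul, map_add, map_one]
  simp only [pderiv_mul, pderiv_X_self, pderiv_X_of_ne (show (1:Fin 2) ≠ 0 by decide),
    mul_one, mul_zero, add_zero]
  linear_combination (pderiv 0 f) * Ea - (pderiv 0 a) * Ef

lemma keyB {f : R2} {d : ℕ} (hf : f.IsHomogeneous d) {b : R2} {m : ℕ}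
    (hb : b.IsHomogeneous m) :
    ((m : ℂ) + 1) • (b * pderiv 1 f)
      = Dmap f (-(b * X 0)) + (d : ℂ) • (f * pderiv 1 b) := by
  have Ef := euler hf; rw [smul_eq_C_mul] at Ef
  have Eb := euler hb; rw [smul_eq_C_mul] at Eb
  rw [Dmap_apply, smul_eq_C_mul, smul_eq_C_mul, map_add, map_one, map_neg, map_neg]
  simp only [pderiv_mul, pderiv_X_self, pderiv_X_of_ne (show (0:Fin 2) ≠ 1 by decide),
    mul_one, mul_zero, add_zero]
  linear_combination (pderiv 1 f) * Eb - (pderiv 1 b) * Ef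

/-! ### Decomposition of the Jacobian ideal and injectivity of `t` -/

section main
variable {f : R2} {d : ℕ}

/-- Each homogeneous element of the Jacobian ideal decomposes as `D_f g + f r`. -/
lemma decompJ (hf : f.IsHomogeneous d) (hd2 : 2 ≤ d) {h : R2} {k : ℕ}
    (hh : h.IsHomogeneous k) (hmem : h ∈ Ideal.span {pderiv 0 f, pderiv 1 f}) :
    ∃ g r : R2, r.IsHomogeneous (k - d) ∧ (k < d → r = 0) ∧ h = Dmap f g + f * r := by
  obtain ⟨p, q, hpq⟩ := Ideal.mem_span_pair.1 hmem
  have hfx := pderiv_isHomogeneous hf 0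
  have hfy := pderiv_isHomogeneous hf 1
  have hhc : homogeneousComponent k h = h :=
    (homogeneousComponent_of_mem ((mem_homogeneousSubmodule _ _).2 hh)).trans (if_pos rfl)
  by_cases hk : k < d - 1
  · refine ⟨0, 0, isHomogeneous_zero _ _ _, fun _ => rfl, ?_⟩
    rw [map_zero, mul_zero, add_zero, ← hhc, ← hpq, map_add,
      homogeneousComponent_mul_right_of_lt hfx p hk,
      homogeneousComponent_mul_right_of_lt hfy q hk, add_zero]
  · push_neg at hk
    set m := k - (d - 1) with hm
    set a := homogeneousComponent m p with hadef
    set b := homogeneousComponent m q with hbdef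
    have ha : a.IsHomogeneous m := homogeneousComponent_isHomogeneous m p
    have hb : b.IsHomogeneous m := homogeneousComponent_isHomogeneous m q
    have hcomp : h = a * pderiv 0 f + b * pderiv 1 f := by
      rw [← hhc, ← hpq, map_add, homogeneousComponent_mul_right hfx p hk,
        homogeneousComponent_mul_right hfy q hk]
    have hmne : ((m : ℂ) + 1) ≠ 0 := Nat.cast_add_one_ne_zero m
    set c : ℂ := ((m : ℂ) + 1)⁻¹ with hc
    have h1 : ((m : ℂ) + 1) • h
        = Dmap f (a * X 1 + -(b * X 0)) + (d : ℂ) • (f * (pderiv 0 a + pderiv 1 b)) := by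
      rw [hcomp, smul_add, keyA hf ha, keyB hf hb, map_add]
      rw [mul_add, smul_add]
      ring_nf
    refine ⟨c • (a * X 1 + -(b * X 0)), c • ((d : ℂ) • (pderiv 0 a + pderiv 1 b)), ?_, ?_, ?_⟩
    · apply csmul_isHomogeneous
      apply csmul_isHomogeneous
      have h0 : (pderiv 0 a).IsHomogeneous (m - 1) := pderiv_isHomogeneous ha 0
      have h1' : (pderiv 1 b).IsHomogeneous (m - 1) := pderiv_isHomogeneous hb 1
      have : m - 1 = k - d := by omega
      rw [this] at h0 h1'
      exact h0.add h1'
    · intro hkd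
      have hm0 : m = 0 := by omega
      rw [hm0] at ha hb
      rw [pderiv_eq_zero_of_isHomogeneous_zero ha 0,
        pderiv_eq_zero_of_isHomogeneous_zero hb 1]
      simp
    · rw [map_smul, mul_smul_comm, mul_smul_comm, ← smul_add, ← h1, smul_smul, hc,
        inv_mul_cancel₀ hmne, one_smul]

/-- Injectivity of multiplication by `f` modulo `D_f`, homogeneous case. -/
lemma inj_homog (hf : f.IsHomogeneous d)
    (hrel : IsRelPrime (pderiv 0 f) (pderiv 1 f)) (hfy : pderiv 1 f ≠ 0)
    {h g : R2} {m : ℕ} (hh : h.IsHomogeneous m)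
    (heq : f * h = Dmap f g) : ∃ u, h = Dmap f u := by
  have Ef := euler hf; rw [smul_eq_C_mul] at Ef
  have Eh := euler hh; rw [smul_eq_C_mul] at Eh
  set A : R2 := (d : ℂ) • pderiv 1 g - X 0 * h with hA
  set B : R2 := (d : ℂ) • pderiv 0 g + X 1 * h with hB
  rw [Dmap_apply] at heq
  have key : pderiv 0 f * A = pderiv 1 f * B := by
    rw [hA, hB, smul_eq_C_mul, smul_eq_C_mul]
    linear_combination (-(C (d:ℂ))) * heq + h * Ef
  obtain ⟨u, hu⟩ : pderiv 1 f ∣ A :=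
    hrel.symm.dvd_of_dvd_mul_left (by rw [key]; exact dvd_mul_right _ B)
  have hBu : B = pderiv 0 f * u := by
    apply mul_left_cancel₀ hfy
    rw [← key, hu]; ring
  have e1 := congrArg (pderiv 0) hu
  have e2 := congrArg (pderiv 1) hBu
  rw [hA] at e1
  rw [hB] at e2
  simp only [map_sub, map_add, pderiv_mul, pderiv_X_self,
    pderiv_X_of_ne (show (1:Fin 2) ≠ 0 by decide),
    pderiv_X_of_ne (show (0:Fin 2) ≠ 1 by decide),
    Derivation.map_smul, smul_eq_C_mul, pderiv_C, one_mul, zero_mul, mul_one, mul_zero,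
    add_zero, zero_add] at e1 e2
  have hcg : pderiv 1 (pderiv 0 g) = pderiv 0 (pderiv 1 g) := pderiv_comm 1 0 g
  have hcf : pderiv 1 (pderiv 0 f) = pderiv 0 (pderiv 1 f) := pderiv_comm 1 0 f
  have hm2 : ((m : ℂ) + 2) ≠ 0 := by
    intro hcon
    have : ((m : ℂ) + 2) = ((m + 2 : ℕ) : ℂ) := by push_cast; ring
    rw [this] at hcon
    exact_mod_cast hcon
  refine ⟨((m : ℂ) + 2)⁻¹ • u, ?_⟩
  have final : ((m : ℂ) + 2) • h = Dmap f u := by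
    rw [Dmap_apply, smul_eq_C_mul, map_add]
    have hC2 : (C (2:ℂ) : R2) = 2 := map_ofNat C 2
    rw [hC2]
    linear_combination e2 - e1 + (-(C (d:ℂ))) * hcg + u * hcf + Eh
  rw [map_smul, ← final, smul_smul, inv_mul_cancel₀ hm2, one_smul]

/-- Injectivity of multiplication by `f` modulo `D_f`. -/
lemma inj (hf : f.IsHomogeneous d) (hd2 : 2 ≤ d)
    (hrel : IsRelPrime (pderiv 0 f) (pderiv 1 f)) (hfy : pderiv 1 f ≠ 0)
    {h : R2} (hmem : f * h ∈ Dsub f) :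
    h ∈ Dsub f := by
  obtain ⟨g, hg⟩ := hmem
  rw [← sum_homogeneousComponent h]
  apply Submodule.sum_mem
  intro m _
  have hfh : f * homogeneousComponent m h = Dmap f (homogeneousComponent (m + 2) g) := by
    have h1 : homogeneousComponent (m + d) (h * f)
        = homogeneousComponent ((m + d) - d) h * f :=
      homogeneousComponent_mul_right hf h le_add_self
    rw [Nat.add_sub_cancel] at h1
    calc f * homogeneousComponent m h = homogeneousComponent m h * f := mul_comm _ _
      _ = homogeneousComponent (m + d) (h * f) := h1.symm
      _ = homogeneousComponent (m + d) (f * h) := by rw [mul_comm h f]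
      _ = Dmap f (homogeneousComponent (m + 2) g) := by
          rw [← hg, homogeneousComponent_Dmap hf hd2]
  obtain ⟨u, hu⟩ := inj_homog hf hrel hfy (homogeneousComponent_isHomogeneous m h) hfh
  exact ⟨u, hu.symm⟩

end main

/-! ### Coprimality of the partial derivatives -/

lemma prime_X0 : Prime (X 0 : R2) := by
  have h := MulEquiv.prime_iff (MvPolynomial.finSuccEquiv ℂ 1).toMulEquiv
    (p := (X 0 : MvPolynomial (Fin 2) ℂ))
  rw [← h]
  have : (MvPolynomial.finSuccEquiv ℂ 1).toMulEquiv (X 0) = Polynomial.X :=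
    finSuccEquiv_X_zero
  rw [this]
  exact Polynomial.prime_X

lemma prime_X1 : Prime (X 1 : R2) := by
  have h := MulEquiv.prime_iff (MvPolynomial.renameEquiv ℂ (Equiv.swap (0:Fin 2) 1)).toMulEquiv
    (p := (X 1 : MvPolynomial (Fin 2) ℂ))
  rw [← h]
  have : (MvPolynomial.renameEquiv ℂ (Equiv.swap (0:Fin 2) 1)).toMulEquiv (X 1) = X 0 := by
    simp
  rw [this]
  exact prime_X0

section coprime
variable {f : R2}
variable (hiso : ∀ p : Fin 2 → ℂ, eval p (pderiv 0 f) = 0 → eval p (pderiv 1 f) = 0 → p = 0)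
include hiso

lemma relprime : IsRelPrime (pderiv 0 f) (pderiv 1 f) := by
  intro c hc0 hc1
  by_contra hcu
  rcases eq_or_ne c 0 with rfl | hc
  · rw [zero_dvd_iff] at hc0 hc1
    have h11 := hiso ![1, 1] (by rw [hc0, map_zero]) (by rw [hc1, map_zero])
    have := congrFun h11 0
    simp at this
  · obtain ⟨q, hqirr, hqc⟩ := WfDvdMonoid.exists_irreducible_factor hcu hc
    have hq : Prime q := UniqueFactorizationMonoid.irreducible_iff_prime.1 hqirr
    have hqfx : q ∣ pderiv 0 f := hqc.trans hc0
    have hqfy : q ∣ pderiv 1 f := hqc.trans hc1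
    have hz : ∀ i : Fin 2, (X i : R2) ∈ (Ideal.span {q}).radical := by
      intro i
      rw [← vanishingIdeal_zeroLocus_eq_radical (K := ℂ)]
      rw [mem_vanishingIdeal_iff]
      intro x hx
      have hxq : eval x q = 0 :=
        (mem_zeroLocus_iff.1 hx) q (Ideal.subset_span rfl)
      obtain ⟨s, hs⟩ := hqfx
      obtain ⟨t, ht⟩ := hqfy
      have hx0 : eval x (pderiv 0 f) = 0 := by rw [hs, map_mul, hxq, zero_mul]
      have hx1 : eval x (pderiv 1 f) = 0 := by rw [ht, map_mul, hxq, zero_mul]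
      have := hiso x hx0 hx1
      rw [this, aeval_X]
      rfl
    have hdvdX : ∀ i : Fin 2, q ∣ X i := by
      intro i
      obtain ⟨n, hn⟩ := Ideal.mem_radical_iff.1 (hz i)
      rw [Ideal.mem_span_singleton] at hn
      exact hq.dvd_of_dvd_pow hn
    have a0 : Associated q (X 0) := hqirr.associated_of_dvd prime_X0.irreducible (hdvdX 0)
    have a1 : Associated q (X 1) := hqirr.associated_of_dvd prime_X1.irreducible (hdvdX 1)
    obtain ⟨w, hw⟩ : (X 0 : R2) ∣ X 1 := (a0.symm.trans a1).dvd
    have := congrArg (eval ![0, 1]) hw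
    simp at this

lemma fy_ne_zero {d : ℕ} (hd2 : 2 ≤ d) (hf : f.IsHomogeneous d) : pderiv 1 f ≠ 0 := by
  intro h0
  have hU : IsUnit (pderiv 0 f) := relprime hiso (dvd_refl _) (h0 ▸ dvd_zero _)
  obtain ⟨v, hv⟩ := hU.exists_right_inv
  have hfx : ((pderiv 0 f)).IsHomogeneous (d - 1) := pderiv_isHomogeneous hf 0
  have h1 := congrArg (eval (0 : Fin 2 → ℂ)) hv
  rw [map_mul, map_one] at h1
  have h2 : eval (0 : Fin 2 → ℂ) (pderiv 0 f) = 0 := by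
    rw [eval_zero, constantCoeff_eq]
    exact hfx.coeff_eq_zero (by simp; omega)
  rw [h2, zero_mul] at h1
  exact zero_ne_one h1

end coprime

/-! ### The Milnor algebra and its graded pieces -/

section quot
variable {f : R2} {d : ℕ}

/-- The Jacobian ideal. -/
noncomputable abbrev J (f : R2) : Ideal R2 := Ideal.span {pderiv 0 f, pderiv 1 f}

/-- Quotient map onto the Milnor algebra, as a `ℂ`-linear map. -/
noncomputable abbrev piJ (f : R2) :
    R2 →ₗ[ℂ] (MvPolynomial (Fin 2) ℂ ⧸ J f) :=
  (Ideal.Quotient.mkₐ ℂ (J f)).toLinearMap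

/-- Degree-`k` part of the Milnor algebra. -/
noncomputable abbrev Qk (f : R2) (k : ℕ) :
    Submodule ℂ (MvPolynomial (Fin 2) ℂ ⧸ J f) :=
  (homogeneousSubmodule (Fin 2) ℂ k).map (piJ f)

lemma Dmap_mem_J (f g : R2) : Dmap f g ∈ J f :=
  Ideal.mem_span_pair.2 ⟨pderiv 1 g, -(pderiv 0 g), by rw [Dmap_apply]; ring⟩

lemma Dsub_le_J (f : R2) : ∀ w ∈ Dsub f, w ∈ J f := by
  rintro w ⟨g, rfl⟩
  exact Dmap_mem_J f g

lemma f_mem_J (hf : f.IsHomogeneous d) (hd0 : d ≠ 0) : f ∈ J f := by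
  have Ef := euler hf
  have hdc : ((d : ℂ)) ≠ 0 := Nat.cast_ne_zero.2 hd0
  refine Ideal.mem_span_pair.2 ⟨C (d:ℂ)⁻¹ * X 0, C (d:ℂ)⁻¹ * X 1, ?_⟩
  rw [smul_eq_C_mul] at Ef
  have h1 : (C ((d:ℂ)⁻¹) * C ((d:ℂ)) : R2) = 1 := by
    rw [← C_mul, inv_mul_cancel₀ hdc, C_1]
  linear_combination (-(C ((d:ℂ)⁻¹))) * Ef + f * h1

lemma comp_mem_J (hf : f.IsHomogeneous d) {w : R2} (hw : w ∈ J f) (k : ℕ) :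
    homogeneousComponent k w ∈ J f := by
  obtain ⟨p, q, hpq⟩ := Ideal.mem_span_pair.1 hw
  have hfx := pderiv_isHomogeneous hf 0
  have hfy := pderiv_isHomogeneous hf 1
  rw [← hpq, map_add]
  rcases lt_or_ge k (d - 1) with hk | hk
  · rw [homogeneousComponent_mul_right_of_lt hfx p hk,
      homogeneousComponent_mul_right_of_lt hfy q hk, add_zero]
    exact Ideal.zero_mem _
  · rw [homogeneousComponent_mul_right hfx p hk, homogeneousComponent_mul_right hfy q hk]
    exact Ideal.add_mem _
      (Ideal.mul_mem_left _ _ (Ideal.subset_span (by simp)))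
      (Ideal.mul_mem_left _ _ (Ideal.subset_span (by simp)))

lemma piJ_eq_zero_iff {w : R2} : piJ f w = 0 ↔ w ∈ J f := by
  simp only [piJ, AlgHom.toLinearMap_apply, Ideal.Quotient.mkₐ_eq_mk,
    Ideal.Quotient.eq_zero_iff_mem]

lemma hQtop (f : R2) : ⨆ k, Qk f k = ⊤ := by
  rw [eq_top_iff]
  intro x _
  obtain ⟨w, rfl⟩ := Ideal.Quotient.mk_surjective (I := J f) x
  have : (Ideal.Quotient.mk (J f)) w = piJ f (∑ i ∈ Finset.range (w.totalDegree + 1),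
      homogeneousComponent i w) := by rw [sum_homogeneousComponent]; rfl
  rw [this, map_sum]
  apply Submodule.sum_mem
  intro k _
  exact Submodule.mem_iSup_of_mem k ⟨homogeneousComponent k w,
    (mem_homogeneousSubmodule _ _).2 (homogeneousComponent_isHomogeneous k w), rfl⟩

lemma hQind (hf : f.IsHomogeneous d) : iSupIndep (Qk f) := by
  rw [iSupIndep_def]
  intro k
  rw [Submodule.disjoint_def]
  intro x hxk hxrest
  obtain ⟨h, hh, hπh⟩ := hxk
  have hh : h.IsHomogeneous k := hh
  have hW : (⨆ j, ⨆ (_ : j ≠ k), Qk f j)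
      ≤ Submodule.map (piJ f) (LinearMap.ker ((piJ f) ∘ₗ (homogeneousComponent k))) := by
    refine iSup_le fun j => iSup_le fun hj => ?_
    rintro y ⟨w, hw, rfl⟩
    refine ⟨w, show w ∈ LinearMap.ker (piJ f ∘ₗ homogeneousComponent k) from ?_, rfl⟩
    rw [LinearMap.mem_ker, LinearMap.comp_apply, homogeneousComponent_of_mem hw,
      if_neg (Ne.symm hj), map_zero]
  obtain ⟨w, hker, hπw⟩ := hW hxrest
  have hker : w ∈ LinearMap.ker (piJ f ∘ₗ homogeneousComponent k) := hker
  rw [LinearMap.mem_ker, LinearMap.comp_apply, piJ_eq_zero_iff] at hker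
  have hJ : h - w ∈ J f := by
    rw [← piJ_eq_zero_iff, map_sub, hπh, hπw, sub_self]
  have hcomp : homogeneousComponent k (h - w) ∈ J f := comp_mem_J hf hJ k
  rw [map_sub, homogeneousComponent_of_mem ((mem_homogeneousSubmodule _ _).2 hh),
    if_pos rfl] at hcomp
  have hhJ : h ∈ J f := by
    have := (J f).add_mem hcomp hker
    rwa [sub_add_cancel] at this
  rw [← hπh, piJ_eq_zero_iff]
  exact hhJ

lemma internalQ (hf : f.IsHomogeneous d) : DirectSum.IsInternal (Qk f) :=
  (DirectSum.isInternal_submodule_iff_iSupIndep_and_iSup_eq_top _).2 ⟨hQind hf, hQtop f⟩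

end quot

end Brieskorn

set_option maxHeartbeats 2000000 in
open Brieskorn in
/-- For `f ∈ ℂ[x,y]` homogeneous of degree `d > 1` with an isolated
singularity at the origin, the Brieskorn module `B(f) = ℂ[x,y]/D_f`, as a `ℂ[t]`-module
with `t` acting by multiplication by `f`, is free of rank `μ(f) = dim_ℂ ℂ[x,y]/J_f`. -/
theorem statement2 (f : MvPolynomial (Fin 2) ℂ) (d : ℕ) (hd : 1 < d)
    (hf : f.IsHomogeneous d)
    (hiso : ∀ p : Fin 2 → ℂ, eval p (pderiv 0 f) = 0 → eval p (pderiv 1 f) = 0 → p = 0) :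
    Module.Free (Polynomial ℂ) (Module.AEval' (Bmul f)) ∧
      Module.rank (Polynomial ℂ) (Module.AEval' (Bmul f)) =
        Module.rank ℂ
          (MvPolynomial (Fin 2) ℂ ⧸
            Ideal.span ({pderiv 0 f, pderiv 1 f} : Set (MvPolynomial (Fin 2) ℂ))) := by
  classical
  have hd2 : 2 ≤ d := hd
  have hd0 : d ≠ 0 := by omega
  have hrel : IsRelPrime (pderiv 0 f) (pderiv 1 f) := relprime hiso
  have hfy : pderiv 1 f ≠ 0 := fy_ne_zero hiso hd2 hf
  -- collected homogeneous basis of the Milnor algebra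
  let internal : DirectSum.IsInternal (Qk f) := internalQ hf
  let bs : (k : ℕ) → Module.Basis (Module.Basis.ofVectorSpaceIndex ℂ (Qk f k)) ℂ (Qk f k) :=
    fun k => Module.Basis.ofVectorSpace ℂ (Qk f k)
  let S : Type := Σ k : ℕ, Module.Basis.ofVectorSpaceIndex ℂ (Qk f k)
  let bQ : Module.Basis S ℂ (MvPolynomial (Fin 2) ℂ ⧸ J f) := internal.collectedBasis bs
  have hbQ : ∀ s : S, bQ s = ((bs s.1 s.2 : Qk f s.1) : MvPolynomial (Fin 2) ℂ ⧸ J f) :=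
    fun s => by rw [internal.collectedBasis_coe bs]
  -- homogeneous lifts of the basis vectors
  have hex : ∀ s : S, ∃ w : MvPolynomial (Fin 2) ℂ, w.IsHomogeneous s.1 ∧
      piJ f w = ((bs s.1 s.2 : Qk f s.1) : MvPolynomial (Fin 2) ℂ ⧸ J f) := by
    intro s
    obtain ⟨w, hw, hw2⟩ := Submodule.mem_map.1 (bs s.1 s.2).2
    exact ⟨w, hw, hw2⟩
  choose eh hehom heπ using hex
  have hπind : LinearIndependent ℂ fun s : S => piJ f (eh s) := by
    have : (fun s : S => piJ f (eh s)) = ⇑bQ := by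
      funext s; rw [heπ s, hbQ s]
    rw [this]; exact bQ.linearIndependent
  have hkill : ∀ (t : Finset S) (g : S → ℂ),
      (∑ s ∈ t, g s • eh s) ∈ J f → ∀ s ∈ t, g s = 0 := by
    intro t g hmem
    apply linearIndependent_iff'.1 hπind t g
    have : (∑ s ∈ t, g s • piJ f (eh s)) = piJ f (∑ s ∈ t, g s • eh s) := by
      rw [map_sum]
      exact Finset.sum_congr rfl fun s _ => (map_smul _ _ _).symm
    rw [this, piJ_eq_zero_iff]
    exact hmem
  -- the Brieskorn module side
  let toB : MvPolynomial (Fin 2) ℂ →ₗ[ℂ] Module.AEval' (Bmul f) :=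
    (Module.AEval'.of (Bmul f)).toLinearMap ∘ₗ (Dsub f).mkQ
  let E : S → Module.AEval' (Bmul f) := fun s => toB (eh s)
  have htoB0 : ∀ w, toB w = 0 ↔ w ∈ Dsub f := by
    intro w
    simp only [toB, LinearMap.comp_apply, LinearEquiv.coe_coe, Submodule.mkQ_apply]
    rw [LinearEquiv.map_eq_zero_iff, Submodule.Quotient.mk_eq_zero]
  have hBapp : ∀ w, Bmul f (Submodule.Quotient.mk w) = Submodule.Quotient.mk (f * w) := by
    intro w
    rw [Bmul, Submodule.mapQ_apply, LinearMap.mulLeft_apply]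
  have hXsmul : ∀ w, (Polynomial.X : Polynomial ℂ) • toB w = toB (f * w) := by
    intro w
    simp only [toB, LinearMap.comp_apply, LinearEquiv.coe_coe, Submodule.mkQ_apply]
    rw [Module.AEval'.X_smul_of, hBapp]
  have hBpow : ∀ (i : ℕ) (w : MvPolynomial (Fin 2) ℂ),
      ((Bmul f)^i) (Submodule.Quotient.mk w) = Submodule.Quotient.mk (f^i * w) := by
    intro i
    induction i with
    | zero => intro w; simp
    | succ n IH =>
      intro w
      rw [pow_succ, Module.End.mul_apply, hBapp, IH (f * w)]
      congr 1
      ring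
  have hpsmul : ∀ (p : Polynomial ℂ) (w : MvPolynomial (Fin 2) ℂ), p • toB w
      = toB (∑ m ∈ Finset.range (p.natDegree + 1), p.coeff m • (f^m * w)) := by
    intro p w
    have h1 : p • toB w = (Module.AEval'.of (Bmul f))
        ((Polynomial.aeval (Bmul f) p) (Submodule.Quotient.mk w)) := by
      have h0 : toB w = Module.AEval'.of (Bmul f) ((Dsub f).mkQ w) := rfl
      rw [h0, ← Module.AEval.of_aeval_smul]
      rfl
    rw [h1, Polynomial.aeval_eq_sum_range]
    simp only [LinearMap.coe_sum, Finset.sum_apply, LinearMap.smul_apply]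
    rw [map_sum, map_sum]
    apply Finset.sum_congr rfl
    intro m _
    rw [hBpow m w, map_smul, map_smul]
    rfl
  -- spanning
  have hhom_mem : ∀ k, ∀ w : MvPolynomial (Fin 2) ℂ, w.IsHomogeneous k →
      toB w ∈ Submodule.span (Polynomial ℂ) (Set.range E) := by
    intro k
    induction k using Nat.strong_induction_on with
    | _ k IH =>
      intro w hw
      have hwmem : piJ f w ∈ Qk f k := ⟨w, hw, rfl⟩
      set y : Qk f k := ⟨piJ f w, hwmem⟩ with hy
      set c : _ →₀ ℂ := (bs k).repr y with hcdef
      set w' : MvPolynomial (Fin 2) ℂ := ∑ i ∈ c.support, c i • eh ⟨k, i⟩ with hw'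
      have hw'hom : w'.IsHomogeneous k := by
        apply MvPolynomial.IsHomogeneous.sum
        intro i _
        exact csmul_isHomogeneous _ (hehom ⟨k, i⟩)
      have hπw' : piJ f w' = piJ f w := by
        have hterm : ∀ i ∈ c.support, piJ f (c i • eh ⟨k, i⟩)
            = c i • ((bs k i : Qk f k) : MvPolynomial (Fin 2) ℂ ⧸ J f) := by
          intro i _
          rw [map_smul, heπ ⟨k, i⟩]
        have hrepr : (∑ i ∈ c.support, c i • bs k i) = y := by
          have h5 := (bs k).linearCombination_repr y
          rwa [Finsupp.linearCombination_apply, Finsupp.sum] at h5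
        have hy2 := congrArg ((Qk f k).subtype) hrepr
        rw [map_sum] at hy2
        simp only [map_smul, Submodule.subtype_apply] at hy2
        rw [hw', map_sum, Finset.sum_congr rfl hterm]
        exact hy2
      have hJ' : w - w' ∈ J f := by
        rw [← piJ_eq_zero_iff, map_sub, hπw', sub_self]
      obtain ⟨g, r, hrhom, hrzero, hdecomp⟩ := decompJ hf hd2 (hw.sub hw'hom) hJ'
      have htot : toB w = toB w' + (Polynomial.X : Polynomial ℂ) • toB r := by
        rw [hXsmul]
        have hwrw : w = w' + (Dmap f g + f * r) := by
          rw [← hdecomp]; ring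
        rw [hwrw, map_add, map_add]
        have hzero : toB (Dmap f g) = 0 := (htoB0 _).2 ⟨g, rfl⟩
        rw [hzero, zero_add]
      rw [htot]
      apply Submodule.add_mem
      · rw [hw', map_sum]
        apply Submodule.sum_mem
        intro i _
        rw [map_smul, ← Module.AEval.C_smul]
        exact Submodule.smul_mem _ _ (Submodule.subset_span ⟨⟨k, i⟩, rfl⟩)
      · apply Submodule.smul_mem
        rcases lt_or_ge k d with hkd | hkd
        · rw [hrzero hkd, map_zero]
          exact Submodule.zero_mem _
        · exact IH (k - d) (by omega) r hrhom
  have hspan : ⊤ ≤ Submodule.span (Polynomial ℂ) (Set.range E) := by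
    intro x _
    obtain ⟨y, rfl⟩ := (Module.AEval'.of (Bmul f)).surjective x
    obtain ⟨w, rfl⟩ := (Dsub f).mkQ_surjective y
    have hxw : (Module.AEval'.of (Bmul f)) ((Dsub f).mkQ w) = toB w := rfl
    rw [hxw, ← sum_homogeneousComponent w, map_sum]
    apply Submodule.sum_mem
    intro k _
    exact hhom_mem k _ (homogeneousComponent_isHomogeneous k w)
  -- inductive step for linear independence
  have hIstep : ∀ (N : ℕ) (v : ℕ → MvPolynomial (Fin 2) ℂ),
      (∀ m, v m ∈ J f → v m = 0) →
      ((∑ m ∈ Finset.range (N + 1), f^m * v m) ∈ Dsub f) → ∀ m ≤ N, v m = 0 := by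
    intro N
    induction N with
    | zero =>
      intro v hvJ hsum m hm
      have hm0 : m = 0 := Nat.le_zero.1 hm
      subst hm0
      apply hvJ
      rw [Finset.sum_range_one, pow_zero, one_mul] at hsum
      exact Dsub_le_J f _ hsum
    | succ N IH =>
      intro v hvJ hsum m hm
      have hrw : (∑ m ∈ Finset.range (N + 2), f^m * v m)
          = v 0 + f * ∑ m ∈ Finset.range (N + 1), f^m * v (m + 1) := by
        rw [Finset.sum_range_succ' (fun m => f^m * v m) (N + 1), pow_zero, one_mul,
          Finset.mul_sum, add_comm]
        congr 1
        apply Finset.sum_congr rfl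
        intro i _
        ring
      have hfmem : f ∈ J f := f_mem_J hf hd0
      have hSJ : (∑ m ∈ Finset.range (N + 2), f^m * v m) ∈ J f := Dsub_le_J f _ hsum
      have hv0 : v 0 = 0 := by
        apply hvJ
        have : v 0 = (∑ m ∈ Finset.range (N + 2), f^m * v m)
            - f * ∑ m ∈ Finset.range (N + 1), f^m * v (m + 1) := by
          rw [hrw]; ring
        rw [this]
        exact Ideal.sub_mem _ hSJ (Ideal.mul_mem_right _ _ hfmem)
      have hT : (∑ m ∈ Finset.range (N + 1), f^m * v (m + 1)) ∈ Dsub f := by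
        apply inj hf hd2 hrel hfy
        have : f * (∑ m ∈ Finset.range (N + 1), f^m * v (m + 1))
            = ∑ m ∈ Finset.range (N + 2), f^m * v m := by
          rw [hrw, hv0, zero_add]
        rw [this]
        exact hsum
      rcases m with _ | m
      · exact hv0
      · exact IH (fun m => v (m + 1)) (fun m => hvJ (m + 1)) hT m (by omega)
  -- linear independence
  have hindep : LinearIndependent (Polynomial ℂ) E := by
    rw [linearIndependent_iff]
    intro l hl
    set N := l.support.sup (fun s => (l s).natDegree) with hN
    set v : ℕ → MvPolynomial (Fin 2) ℂ :=
      fun m => ∑ s ∈ l.support, ((l s).coeff m) • eh s with hv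
    have hvJ : ∀ m, v m ∈ J f → v m = 0 := by
      intro m hm
      have h0 := hkill l.support (fun s => (l s).coeff m) hm
      rw [hv]
      apply Finset.sum_eq_zero
      intro s hs
      rw [show (l s).coeff m = 0 from h0 s hs, zero_smul]
    have hsum : (∑ m ∈ Finset.range (N + 1), f^m * v m) ∈ Dsub f := by
      have h1 : Finsupp.linearCombination (Polynomial ℂ) E l
          = ∑ s ∈ l.support, (l s) • E s := Finsupp.linearCombination_apply _ _
      have h2 : ∀ s ∈ l.support, (l s) • E s
          = toB (∑ m ∈ Finset.range (N + 1), ((l s).coeff m) • (f^m * eh s)) := by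
        intro s hs
        rw [show E s = toB (eh s) from rfl, hpsmul]
        congr 1
        apply Finset.sum_subset
        · refine Finset.range_subset_range.2 ?_
          have h6 : (l s).natDegree ≤ N := Finset.le_sup (f := fun s => (l s).natDegree) hs
          omega
        · intro m _ hm'
          rw [Polynomial.coeff_eq_zero_of_natDegree_lt, zero_smul]
          simp only [Finset.mem_range, not_lt] at hm' ⊢
          omega
      have h3 : toB (∑ s ∈ l.support, ∑ m ∈ Finset.range (N + 1),
          ((l s).coeff m) • (f^m * eh s)) = 0 := by
        rw [map_sum, ← Finset.sum_congr rfl h2, ← h1, hl]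
      have h4 : (∑ s ∈ l.support, ∑ m ∈ Finset.range (N + 1),
          ((l s).coeff m) • (f^m * eh s)) = ∑ m ∈ Finset.range (N + 1), f^m * v m := by
        rw [Finset.sum_comm]
        apply Finset.sum_congr rfl
        intro m _
        rw [hv, Finset.mul_sum]
        apply Finset.sum_congr rfl
        intro s _
        rw [mul_smul_comm]
      rw [h4] at h3
      exact (htoB0 _).1 h3
    have hv0 : ∀ m ≤ N, v m = 0 := hIstep N v hvJ hsum
    have hls : ∀ s, l s = 0 := by
      intro s
      by_cases hs : s ∈ l.support
      · apply Polynomial.ext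
        intro m
        rw [Polynomial.coeff_zero]
        rcases le_or_gt m N with hmN | hmN
        · have hvm := hv0 m hmN
          have h0 := hkill l.support (fun s => (l s).coeff m)
            (by rw [show (∑ s ∈ l.support, ((l s).coeff m) • eh s) = v m from rfl, hvm]
                exact Ideal.zero_mem _)
          exact h0 s hs
        · have h6 : (l s).natDegree ≤ N := Finset.le_sup (f := fun s => (l s).natDegree) hs
          exact Polynomial.coeff_eq_zero_of_natDegree_lt (by omega)
      · exact Finsupp.notMem_support_iff.1 hs
    exact Finsupp.ext hls
  -- assemble
  let basis : Module.Basis S (Polynomial ℂ) (Module.AEval' (Bmul f)) := Module.Basis.mk hindep hspan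
  constructor
  · exact Module.Free.of_basis basis
  · rw [← basis.mk_eq_rank'', ← bQ.mk_eq_rank'']
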